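/- Let providers s_1, …, s_m have nondecreasing availabilities τ_1 ≤ ⋯ ≤ τ_m, and let n jobs with lengths w_1, …, w_n arrive one at a time in an arbitrary (adversarial) order. The Greedy-Shortest Matching algorithm (GSM) matches each arriving job d to the still-unmatched provider of smallest availability among those with τ_i ≥ w_d, and rejects d if no unmatched feasible provider exists; matches are irrevocable. Then the matching M_GSM produced by GSM has maximum cardinality among all matchings of the feasibility graph, and |M_GSM| = n − Δ, where Δ = max_{1 ≤ i ≤ m+1} (|D_{≥i}| − |S_{≥i}|)₊ with t(d) = min{i : τ_i ≥ w_d} (m+1 if none), D_{≥i} = {d : t(d) ≥ i}, and S_{≥i} = {i, …, m}. -/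
import Mathlib

set_option maxHeartbeats 1000000

/-- A matching: a set of provider–job pairs in which each provider and each job
appears at most once. -/
def IsMatching {m : ℕ} {J : Type*} (M : Finset (Fin m × J)) : Prop :=
  (∀ p ∈ M, ∀ q ∈ M, p.1 = q.1 → p = q) ∧ (∀ p ∈ M, ∀ q ∈ M, p.2 = q.2 → p = q)

/-- `t(d)`: the least (0-indexed) provider index feasible for a job of length `wd`,
or `m` if none is feasible. -/
noncomputable def tIdx {m : ℕ} (τ : Fin m → ℕ) (wd : ℕ) : ℕ :=
  sInf {i : ℕ | i = m ∨ ∃ h : i < m, wd ≤ τ ⟨i, h⟩}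

/-- The deficiency `Δ = max_i (|D_{≥i}| − |S_{≥i}|)₊`. -/
noncomputable def deficiency {m n : ℕ} (τ : Fin m → ℕ) (w : Fin n → ℕ) : ℕ :=
  (Finset.range (m + 1)).sup fun i =>
    (Finset.univ.filter fun d : Fin n => i ≤ tIdx τ (w d)).card - (m - i)

/-- GSM's choice for an arriving job of length `wd` given the already-used
providers: the unmatched feasible provider of least index (with `τ` monotone
this is the one of smallest availability), `none` if no unmatched feasible
provider exists (rejection). -/
def gsmPick {m : ℕ} (τ : Fin m → ℕ) (used : Finset (Fin m)) (wd : ℕ) :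
    Option (Fin m) :=
  let s := Finset.univ.filter fun i => i ∉ used ∧ wd ≤ τ i
  if h : s.Nonempty then some (s.min' h) else none

/-- The matching produced by GSM on the arrival sequence `ds` (irrevocable
online matches). -/
def gsmRunOn {m n : ℕ} (τ : Fin m → ℕ) (w : Fin n → ℕ) (ds : List (Fin n)) :
    Finset (Fin m × Fin n) :=
  ds.foldl (fun M d =>
    match gsmPick τ (M.image Prod.fst) (w d) with
    | some i => insert (i, d) M
    | none => M) ∅

/-! ### Auxiliary lemmas -/

lemma tIdx_le_m {m : ℕ} (τ : Fin m → ℕ) (wd : ℕ) : tIdx τ wd ≤ m :=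
  Nat.sInf_le (Or.inl rfl)

lemma tIdx_le_iff {m : ℕ} {τ : Fin m → ℕ} (hτ : Monotone τ) (wd : ℕ) (i : Fin m) :
    tIdx τ wd ≤ i.val ↔ wd ≤ τ i := by
  constructor
  · intro h
    have hne : {j : ℕ | j = m ∨ ∃ h : j < m, wd ≤ τ ⟨j, h⟩}.Nonempty := ⟨m, Or.inl rfl⟩
    have hmem : tIdx τ wd ∈ {j : ℕ | j = m ∨ ∃ h : j < m, wd ≤ τ ⟨j, h⟩} := Nat.sInf_mem hne
    rcases hmem with hm | ⟨hlt, hle⟩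
    · exfalso; have := i.isLt; omega
    · exact hle.trans (hτ (show (⟨tIdx τ wd, hlt⟩ : Fin m) ≤ i from h))
  · intro h
    exact Nat.sInf_le (Or.inr ⟨i.isLt, by simpa using h⟩)

lemma gsmPick_pos {m : ℕ} (τ : Fin m → ℕ) (used : Finset (Fin m)) (wd : ℕ)
    (h : (Finset.univ.filter fun i => i ∉ used ∧ wd ≤ τ i).Nonempty) :
    gsmPick τ used wd = some ((Finset.univ.filter fun i => i ∉ used ∧ wd ≤ τ i).min' h) := by
  unfold gsmPick
  exact dif_pos h

lemma gsmPick_neg {m : ℕ} (τ : Fin m → ℕ) (used : Finset (Fin m)) (wd : ℕ)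
    (h : ¬ (Finset.univ.filter fun i => i ∉ used ∧ wd ≤ τ i).Nonempty) :
    gsmPick τ used wd = none := by
  unfold gsmPick
  exact dif_neg h

lemma card_filter_le_val (m i : ℕ) :
    ((Finset.univ : Finset (Fin m)).filter fun q => i ≤ q.val).card = m - i := by
  have himg : (((Finset.univ : Finset (Fin m)).filter fun q => i ≤ q.val).image Fin.val)
      = Finset.Ico i m := by
    ext v
    simp only [Finset.mem_image, Finset.mem_filter, Finset.mem_univ, true_and, Finset.mem_Ico]
    constructor
    · rintro ⟨q, hq, rfl⟩; exact ⟨hq, q.isLt⟩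
    · rintro ⟨h1, h2⟩; exact ⟨⟨v, h2⟩, h1, rfl⟩
  have := Finset.card_image_of_injective
    ((Finset.univ : Finset (Fin m)).filter fun q => i ≤ q.val) Fin.val_injective
  rw [himg] at this
  rw [← this, Nat.card_Ico]

/-- One GSM step. -/
def gsmStep {m n : ℕ} (τ : Fin m → ℕ) (w : Fin n → ℕ)
    (M : Finset (Fin m × Fin n)) (d : Fin n) : Finset (Fin m × Fin n) :=
  match gsmPick τ (M.image Prod.fst) (w d) with
  | some i => insert (i, d) M
  | none => M

lemma gsmRunOn_eq_foldl {m n : ℕ} (τ : Fin m → ℕ) (w : Fin n → ℕ) (ds : List (Fin n)) :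
    gsmRunOn τ w ds = ds.foldl (gsmStep τ w) ∅ := rfl

/-- The invariant maintained by GSM: `P` is the list of jobs processed so far and `M`
the current matching.  Besides `M` being a feasible matching on jobs from `P`, no match
jumps over an unmatched feasible provider (clause 4), and a rejected job has all its
feasible providers used (clause 5). -/
def InvP {m n : ℕ} (τ : Fin m → ℕ) (w : Fin n → ℕ) (P : List (Fin n))
    (M : Finset (Fin m × Fin n)) : Prop :=
  IsMatching M ∧
  (∀ p ∈ M, tIdx τ (w p.2) ≤ p.1.val) ∧
  (∀ p ∈ M, p.2 ∈ P) ∧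
  (∀ p ∈ M, ∀ q : Fin m, tIdx τ (w p.2) ≤ q.val → q.val < p.1.val →
    q ∈ M.image Prod.fst) ∧
  (∀ d ∈ P, (∀ p ∈ M, p.2 ≠ d) → ∀ q : Fin m, tIdx τ (w d) ≤ q.val →
    q ∈ M.image Prod.fst)

lemma inv_step {m n : ℕ} (τ : Fin m → ℕ) (hτ : Monotone τ) (w : Fin n → ℕ)
    (P : List (Fin n)) (M : Finset (Fin m × Fin n)) (d : Fin n)
    (hInv : InvP τ w P M) (hd : d ∉ P) :
    InvP τ w (P ++ [d]) (gsmStep τ w M d) := by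
  obtain ⟨h1, h2, h3, h4, h5⟩ := hInv
  by_cases hne : (Finset.univ.filter
      fun i : Fin m => i ∉ M.image Prod.fst ∧ w d ≤ τ i).Nonempty
  · -- accepted
    set s := Finset.univ.filter
      (fun i : Fin m => i ∉ M.image Prod.fst ∧ w d ≤ τ i) with hs
    set i := s.min' hne with hi
    have hstep : gsmStep τ w M d = insert (i, d) M := by
      unfold gsmStep; rw [gsmPick_pos τ _ _ hne]
    have hi_mem : i ∈ s := s.min'_mem hne
    rw [hs, Finset.mem_filter] at hi_mem
    obtain ⟨-, hiU, hiτ⟩ := hi_mem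
    have hminle : ∀ q ∈ s, i ≤ q := fun q hq => s.min'_le q hq
    have hfst : ∀ p ∈ M, p.1 ≠ i := by
      intro p hp e
      exact hiU (Finset.mem_image.2 ⟨p, hp, e⟩)
    have hsnd : ∀ p ∈ M, p.2 ≠ d := by
      intro p hp e
      exact hd (e ▸ h3 p hp)
    have himg : (insert (i, d) M).image Prod.fst = insert i (M.image Prod.fst) := by
      simp [Finset.image_insert]
    rw [hstep]
    refine ⟨⟨?_, ?_⟩, ?_, ?_, ?_, ?_⟩
    · intro p hp q hq heq
      rcases Finset.mem_insert.1 hp with rfl | hp <;>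
        rcases Finset.mem_insert.1 hq with rfl | hq
      · rfl
      · exact absurd heq.symm (hfst q hq)
      · exact absurd heq (hfst p hp)
      · exact h1.1 p hp q hq heq
    · intro p hp q hq heq
      rcases Finset.mem_insert.1 hp with rfl | hp <;>
        rcases Finset.mem_insert.1 hq with rfl | hq
      · rfl
      · exact absurd heq.symm (hsnd q hq)
      · exact absurd heq (hsnd p hp)
      · exact h1.2 p hp q hq heq
    · intro p hp
      rcases Finset.mem_insert.1 hp with rfl | hp
      · exact (tIdx_le_iff hτ (w d) i).mpr hiτ
      · exact h2 p hp
    · intro p hp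
      rcases Finset.mem_insert.1 hp with rfl | hp
      · simp
      · simp [h3 p hp]
    · intro p hp q hq1 hq2
      rw [himg]
      rcases Finset.mem_insert.1 hp with rfl | hp
      · refine Finset.mem_insert_of_mem ?_
        by_contra hqU
        have hqs : q ∈ s := by
          rw [hs, Finset.mem_filter]
          exact ⟨Finset.mem_univ q, hqU, (tIdx_le_iff hτ (w d) q).mp hq1⟩
        have := hminle q hqs
        exact absurd hq2 (not_lt.2 (Fin.le_def.mp this))
      · exact Finset.mem_insert_of_mem (h4 p hp q hq1 hq2)
    · intro d' hd' hunm q hq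
      rw [himg]
      rcases List.mem_append.1 hd' with hd' | hd'
      · refine Finset.mem_insert_of_mem (h5 d' hd' ?_ q hq)
        intro p hp
        exact hunm p (Finset.mem_insert_of_mem hp)
      · exfalso
        have : d' = d := by simpa using hd'
        exact hunm (i, d) (Finset.mem_insert_self _ _) (by simp [this])
  · -- rejected
    have hstep : gsmStep τ w M d = M := by
      unfold gsmStep; rw [gsmPick_neg τ _ _ hne]
    rw [hstep]
    refine ⟨h1, h2, ?_, h4, ?_⟩
    · intro p hp; exact List.mem_append.2 (Or.inl (h3 p hp))
    · intro d' hd' hunm q hq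
      rcases List.mem_append.1 hd' with hd' | hd'
      · exact h5 d' hd' hunm q hq
      · have hdd : d' = d := by simpa using hd'
        subst hdd
        by_contra hqU
        exact hne ⟨q, Finset.mem_filter.2
          ⟨Finset.mem_univ q, hqU, (tIdx_le_iff hτ (w d') q).mp hq⟩⟩

lemma inv_fold {m n : ℕ} (τ : Fin m → ℕ) (hτ : Monotone τ) (w : Fin n → ℕ) :
    ∀ (L P : List (Fin n)) (M : Finset (Fin m × Fin n)),
      InvP τ w P M → (∀ d ∈ L, d ∉ P) → L.Nodup →
      InvP τ w (P ++ L) (L.foldl (gsmStep τ w) M)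
  | [], P, M, h, _, _ => by simpa using h
  | d :: L, P, M, h, hL, hnd => by
    have h' := inv_step τ hτ w P M d h (hL d (by simp))
    rw [List.nodup_cons] at hnd
    have hrec := inv_fold τ hτ w L (P ++ [d]) _ h'
      (by
        intro e he
        simp only [List.mem_append, List.mem_singleton, not_or]
        exact ⟨hL e (List.mem_cons_of_mem _ he), fun hedd => hnd.1 (hedd ▸ he)⟩)
      hnd.2
    simpa using hrec

lemma inv_run {m n : ℕ} (τ : Fin m → ℕ) (hτ : Monotone τ) (w : Fin n → ℕ)
    (ds : List (Fin n)) (hnd : ds.Nodup) :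
    InvP τ w ds (gsmRunOn τ w ds) := by
  have := inv_fold τ hτ w ds [] ∅ ?_ (by simp) hnd
  · simpa [gsmRunOn_eq_foldl] using this
  · refine ⟨⟨?_, ?_⟩, ?_, ?_, ?_, ?_⟩ <;> simp

/-! ### Counting lemmas -/

lemma snd_injOn {m n : ℕ} {M : Finset (Fin m × Fin n)} (hM : IsMatching M)
    {A : Finset (Fin m × Fin n)} (hA : A ⊆ M) :
    (A.image Prod.snd).card = A.card :=
  Finset.card_image_of_injOn fun p hp q hq h => hM.2 p (hA hp) q (hA hq) h

lemma fst_injOn {m n : ℕ} {M : Finset (Fin m × Fin n)} (hM : IsMatching M)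
    {A : Finset (Fin m × Fin n)} (hA : A ⊆ M) :
    (A.image Prod.fst).card = A.card :=
  Finset.card_image_of_injOn fun p hp q hq h => hM.1 p (hA hp) q (hA hq) h

lemma matching_card_le_n {m n : ℕ} {M : Finset (Fin m × Fin n)} (hM : IsMatching M) :
    M.card ≤ n := by
  have h := snd_injOn hM (Finset.Subset.refl M)
  calc M.card = (M.image Prod.snd).card := h.symm
    _ ≤ (Finset.univ : Finset (Fin n)).card := Finset.card_le_card (Finset.subset_univ _)
    _ = n := by simp

/-- Upper bound: any feasible matching has cardinality at most `n - Δ`. -/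
lemma matching_card_le {m n : ℕ} (τ : Fin m → ℕ) (hτ : Monotone τ) (w : Fin n → ℕ)
    (M : Finset (Fin m × Fin n)) (hM : IsMatching M)
    (hfeas : ∀ p ∈ M, w p.2 ≤ τ p.1) :
    M.card ≤ n - deficiency τ w := by
  have hMn : M.card ≤ n := matching_card_le_n hM
  have hdef : deficiency τ w ≤ n - M.card := by
    apply Finset.sup_le
    intro i hi
    set D := (Finset.univ.filter fun d : Fin n => i ≤ tIdx τ (w d)).card with hD
    have hDn : D ≤ n := by
      calc D ≤ (Finset.univ : Finset (Fin n)).card := Finset.card_filter_le _ _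
        _ = n := by simp
    have hB : (M.filter fun p => i ≤ tIdx τ (w p.2)).card ≤ m - i := by
      have hsub : (M.filter fun p => i ≤ tIdx τ (w p.2)).image Prod.fst ⊆
          (Finset.univ : Finset (Fin m)).filter fun q => i ≤ q.val := by
        intro q hq
        rw [Finset.mem_image] at hq
        obtain ⟨p, hp, rfl⟩ := hq
        rw [Finset.mem_filter] at hp
        refine Finset.mem_filter.2 ⟨Finset.mem_univ _, ?_⟩
        exact le_trans hp.2 ((tIdx_le_iff hτ (w p.2) p.1).mpr (hfeas p hp.1))
      calc (M.filter fun p => i ≤ tIdx τ (w p.2)).card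
          = ((M.filter fun p => i ≤ tIdx τ (w p.2)).image Prod.fst).card :=
            (fst_injOn hM (Finset.filter_subset _ _)).symm
        _ ≤ ((Finset.univ : Finset (Fin m)).filter fun q => i ≤ q.val).card :=
            Finset.card_le_card hsub
        _ = m - i := card_filter_le_val m i
    have hC : (M.filter fun p => ¬ i ≤ tIdx τ (w p.2)).card ≤ n - D := by
      have hsub : (M.filter fun p => ¬ i ≤ tIdx τ (w p.2)).image Prod.snd ⊆
          (Finset.univ : Finset (Fin n)).filter fun d => ¬ i ≤ tIdx τ (w d) := by
        intro e he
        rw [Finset.mem_image] at he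
        obtain ⟨p, hp, rfl⟩ := he
        rw [Finset.mem_filter] at hp
        exact Finset.mem_filter.2 ⟨Finset.mem_univ _, hp.2⟩
      have hcount : D + ((Finset.univ : Finset (Fin n)).filter
          fun d => ¬ i ≤ tIdx τ (w d)).card = n := by
        rw [hD]
        rw [Finset.card_filter_add_card_filter_not]
        simp
      calc (M.filter fun p => ¬ i ≤ tIdx τ (w p.2)).card
          = ((M.filter fun p => ¬ i ≤ tIdx τ (w p.2)).image Prod.snd).card :=
            (snd_injOn hM (Finset.filter_subset _ _)).symm
        _ ≤ ((Finset.univ : Finset (Fin n)).filter fun d => ¬ i ≤ tIdx τ (w d)).card :=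
            Finset.card_le_card hsub
        _ ≤ n - D := by omega
    have hsplit : (M.filter fun p => i ≤ tIdx τ (w p.2)).card +
        (M.filter fun p => ¬ i ≤ tIdx τ (w p.2)).card = M.card :=
      Finset.card_filter_add_card_filter_not
        (fun p : Fin m × Fin n => i ≤ tIdx τ (w p.2))
    omega
  omega

/-- Lower bound extracted from the invariant at the final state. -/
lemma card_lower {m n : ℕ} (τ : Fin m → ℕ) (w : Fin n → ℕ)
    (M : Finset (Fin m × Fin n))
    (h1 : IsMatching M)
    (h4 : ∀ p ∈ M, ∀ q : Fin m, tIdx τ (w p.2) ≤ q.val → q.val < p.1.val →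
      q ∈ M.image Prod.fst)
    (h5 : ∀ d : Fin n, (∀ p ∈ M, p.2 ≠ d) → ∀ q : Fin m, tIdx τ (w d) ≤ q.val →
      q ∈ M.image Prod.fst) :
    n ≤ M.card + deficiency τ w := by
  classical
  set U := M.image Prod.fst with hU
  set J := M.image Prod.snd with hJ
  have hJcard : J.card = M.card := snd_injOn h1 (Finset.Subset.refl M)
  by_cases hfull : ∀ d : Fin n, d ∈ J
  · have : (Finset.univ : Finset (Fin n)) ⊆ J := fun d _ => hfull d
    have : n ≤ J.card := by
      calc n = (Finset.univ : Finset (Fin n)).card := by simp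
        _ ≤ J.card := Finset.card_le_card this
    omega
  · push_neg at hfull
    obtain ⟨d0, hd0⟩ := hfull
    have hd0un : ∀ p ∈ M, p.2 ≠ d0 := by
      intro p hp e
      exact hd0 (hJ ▸ Finset.mem_image.2 ⟨p, hp, e⟩)
    set T : Set ℕ := {i : ℕ | ∀ q : Fin m, i ≤ q.val → q ∈ U} with hT
    have hT0 : tIdx τ (w d0) ∈ T := fun q hq => h5 d0 hd0un q hq
    set i₀ := sInf T with hi₀
    have hi₀le : i₀ ≤ tIdx τ (w d0) := Nat.sInf_le hT0
    have hi₀m : i₀ ≤ m := hi₀le.trans (tIdx_le_m τ (w d0))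
    have hstar : ∀ q : Fin m, i₀ ≤ q.val → q ∈ U := Nat.sInf_mem (⟨_, hT0⟩ : T.Nonempty)
    have hP1 : ∀ p ∈ M, i₀ ≤ p.1.val → i₀ ≤ tIdx τ (w p.2) := by
      intro p hp hp1
      by_contra ht
      push_neg at ht
      have hi₀pos : 1 ≤ i₀ := by omega
      have hnotT : i₀ - 1 ∉ T := Nat.notMem_of_lt_sInf (by omega)
      rw [hT, Set.mem_setOf_eq] at hnotT
      push_neg at hnotT
      obtain ⟨q, hq1, hq2⟩ := hnotT
      have hqlt : q.val < i₀ := by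
        by_contra hge
        exact hq2 (hstar q (by omega))
      exact hq2 (h4 p hp q (by omega) (by omega))
    have hP2 : ∀ d : Fin n, d ∉ J → i₀ ≤ tIdx τ (w d) := by
      intro d hd
      have hun : ∀ p ∈ M, p.2 ≠ d := by
        intro p hp e
        exact hd (hJ ▸ Finset.mem_image.2 ⟨p, hp, e⟩)
      exact Nat.sInf_le (fun q hq => h5 d hun q hq)
    set A := M.filter (fun p => i₀ ≤ p.1.val) with hA
    have hAF : A.image Prod.fst = (Finset.univ : Finset (Fin m)).filter
        (fun q => i₀ ≤ q.val) := by
      ext q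
      simp only [hA, Finset.mem_image, Finset.mem_filter, Finset.mem_univ, true_and]
      constructor
      · rintro ⟨p, ⟨hp, hp1⟩, rfl⟩; exact hp1
      · intro hq
        have := hstar q hq
        rw [hU, Finset.mem_image] at this
        obtain ⟨p, hp, rfl⟩ := this
        exact ⟨p, ⟨hp, hq⟩, rfl⟩
    have hAcard : A.card = m - i₀ := by
      rw [← fst_injOn h1 (Finset.filter_subset _ _), hAF, card_filter_le_val]
    have hAJcard : (A.image Prod.snd).card = m - i₀ := by
      rw [snd_injOn h1 (Finset.filter_subset _ _)]; exact hAcard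
    set R := (Finset.univ : Finset (Fin n)).filter (fun d => d ∉ J) with hR
    have hRcard : R.card = n - M.card := by
      have hcompl : R = Jᶜ := by ext d; simp [hR]
      rw [hcompl, Finset.card_compl, hJcard]
      simp
    have hdisj : Disjoint (A.image Prod.snd) R := by
      rw [Finset.disjoint_left]
      intro e he heR
      rw [Finset.mem_image] at he
      obtain ⟨p, hp, rfl⟩ := he
      rw [hR, Finset.mem_filter] at heR
      exact heR.2 (hJ ▸ Finset.mem_image.2 ⟨p, Finset.filter_subset _ _ hp, rfl⟩)
    have hsub : (A.image Prod.snd) ∪ R ⊆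
        (Finset.univ.filter fun d : Fin n => i₀ ≤ tIdx τ (w d)) := by
      intro e he
      refine Finset.mem_filter.2 ⟨Finset.mem_univ _, ?_⟩
      rcases Finset.mem_union.1 he with he | he
      · rw [Finset.mem_image] at he
        obtain ⟨p, hp, rfl⟩ := he
        rw [hA, Finset.mem_filter] at hp
        exact hP1 p hp.1 hp.2
      · rw [hR, Finset.mem_filter] at he
        exact hP2 e he.2
    have hDbig : (m - i₀) + (n - M.card) ≤
        (Finset.univ.filter fun d : Fin n => i₀ ≤ tIdx τ (w d)).card := by
      calc (m - i₀) + (n - M.card) = (A.image Prod.snd).card + R.card := by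
            rw [hAJcard, hRcard]
        _ = ((A.image Prod.snd) ∪ R).card := (Finset.card_union_of_disjoint hdisj).symm
        _ ≤ _ := Finset.card_le_card hsub
    have hsup : (Finset.univ.filter fun d : Fin n => i₀ ≤ tIdx τ (w d)).card - (m - i₀)
        ≤ deficiency τ w :=
      Finset.le_sup (f := fun i =>
        (Finset.univ.filter fun d : Fin n => i ≤ tIdx τ (w d)).card - (m - i))
        (Finset.mem_range.2 (by omega))
    have hMn : M.card ≤ n := matching_card_le_n h1
    omega

/-- for any (adversarial) arrival order of the `n` jobs, the GSM
matching has maximum cardinality among all matchings of the feasibility graph,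
and `|M_GSM| = n − Δ`. -/
theorem gsm_maximum_and_cardinality
    {m n : ℕ} (τ : Fin m → ℕ) (hτ : Monotone τ) (w : Fin n → ℕ)
    (ds : List (Fin n)) (hds : ds.Perm (List.finRange n)) :
    (∀ M : Finset (Fin m × Fin n), IsMatching M → (∀ p ∈ M, w p.2 ≤ τ p.1) →
      M.card ≤ (gsmRunOn τ w ds).card) ∧
    (gsmRunOn τ w ds).card = n - deficiency τ w := by
  have hnd : ds.Nodup := hds.nodup_iff.2 (List.nodup_finRange n)
  obtain ⟨h1, h2, h3, h4, h5⟩ := inv_run τ hτ w ds hnd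
  have hfeas : ∀ p ∈ gsmRunOn τ w ds, w p.2 ≤ τ p.1 := fun p hp =>
    (tIdx_le_iff hτ (w p.2) p.1).mp (h2 p hp)
  have hub := matching_card_le τ hτ w _ h1 hfeas
  have h5' : ∀ d : Fin n, (∀ p ∈ gsmRunOn τ w ds, p.2 ≠ d) →
      ∀ q : Fin m, tIdx τ (w d) ≤ q.val → q ∈ (gsmRunOn τ w ds).image Prod.fst :=
    fun d => h5 d (hds.mem_iff.2 (List.mem_finRange d))
  have hlb := card_lower τ w _ h1 h4 h5'
  have hcard : (gsmRunOn τ w ds).card = n - deficiency τ w := by omega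
  exact ⟨fun M hM hMf => hcard ▸ matching_card_le τ hτ w M hM hMf, hcard⟩
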